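/- Let N ≥ 3, let a ∈ C²(ℝ) with a(s) ≥ ν > 0 for all s ∈ ℝ, let p > 1 and m > 0, let g be the solution of g'(s) = 1/√(a(g(s))), g(0) = 0, and let h(t) = (|g(t)|^{p−1} g(t) − m g(t))/√(a(g(t))). If u ∈ C²(ℝ^N) satisfies u > 0 in ℝ^N and −a(u)Δu − (1/2)a'(u)|∇u|² + m u = u^p pointwise in ℝ^N, then v := g⁻¹ ∘ u belongs to C²(ℝ^N), v > 0 in ℝ^N, and −Δv(x) = h(v(x)) for all x ∈ ℝ^N. -/

import Mathlib

open Filter Real Topology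

/-- The Laplacian of `u : ℝ^N → ℝ`, as the sum of second partial derivatives. -/
noncomputable def lap {N : ℕ} (u : EuclideanSpace ℝ (Fin N) → ℝ)
    (x : EuclideanSpace ℝ (Fin N)) : ℝ :=
  ∑ i : Fin N, fderiv ℝ (fun y => fderiv ℝ u y (EuclideanSpace.single i 1)) x
    (EuclideanSpace.single i 1)

theorem solution_yields_dual_solution
    (N : ℕ) (hN : 3 ≤ N)
    (a : ℝ → ℝ) (ν : ℝ) (hν : 0 < ν)
    (ha : ContDiff ℝ 2 a) (hbound : ∀ s, ν ≤ a s)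
    (p m : ℝ) (hp : 1 < p) (hm : 0 < m)
    (g : ℝ → ℝ)
    (hg : ∀ s, HasDerivAt g (1 / Real.sqrt (a (g s))) s) (hg0 : g 0 = 0)
    (hbij : Function.Bijective g)
    (h : ℝ → ℝ)
    (hh : ∀ t, h t = (|g t| ^ (p - 1) * g t - m * g t) / Real.sqrt (a (g t)))
    (u : EuclideanSpace ℝ (Fin N) → ℝ) (hu : ContDiff ℝ 2 u)
    (hupos : ∀ x, 0 < u x)
    (hueq : ∀ x, -(a (u x) * lap u x)
        - (1 / 2) * deriv a (u x) * ‖gradient u x‖ ^ 2 + m * u x = u x ^ p) :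
    ContDiff ℝ 2 (Function.invFun g ∘ u) ∧ (∀ x, 0 < (Function.invFun g ∘ u) x) ∧
    (∀ x, -lap (Function.invFun g ∘ u) x = h ((Function.invFun g ∘ u) x)) := by
  have hapos : ∀ t, 0 < a t := fun t => lt_of_lt_of_le hν (hbound t)
  have hsq : ∀ t, 0 < Real.sqrt (a t) := fun t => Real.sqrt_pos.2 (hapos t)
  set f := Function.invFun g with hfdef
  have hgf : ∀ t, g (f t) = t := fun t => Function.rightInverse_invFun hbij.2 t
  have hfg : ∀ s, f (g s) = s := fun s => Function.leftInverse_invFun hbij.1 s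
  have hgmono : StrictMono g := strictMono_of_deriv_pos fun s => by
    rw [(hg s).deriv]
    have := hsq (g s); positivity
  have hfcont : Continuous f :=
    (hgmono.orderIsoOfRightInverse g f hgf).toHomeomorph.symm.continuous
  -- derivative of the inverse
  have hf' : ∀ t, HasDerivAt f (Real.sqrt (a t)) t := by
    intro t
    have h1 : HasDerivAt g (1 / Real.sqrt (a t)) (f t) := by
      have := hg (f t); rwa [hgf] at this
    have h2 := HasDerivAt.of_local_left_inverse hfcont.continuousAt h1
      (by have := hsq t; positivity) (Eventually.of_forall hgf)
    simpa using h2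
  have haD : Differentiable ℝ a := ha.differentiable two_ne_zero
  have ha' : ∀ t, HasDerivAt a (deriv a t) t := fun t => (haD t).hasDerivAt
  -- derivative of sqrt ∘ a
  have hq : ∀ t, HasDerivAt (fun s => Real.sqrt (a s))
      (deriv a t / (2 * Real.sqrt (a t))) t := by
    intro t
    have h2 : HasDerivAt (fun s => Real.sqrt (a s)) (1 / (2 * Real.sqrt (a t)) * deriv a t) t :=
      (Real.hasDerivAt_sqrt (ne_of_gt (hapos t))).comp t (ha' t)
    convert h2 using 1
    ring
  have hqc : ContDiff ℝ 2 (fun t => Real.sqrt (a t)) :=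
    ha.sqrt (fun t => (hapos t).ne')
  -- f is C²
  have hfC2 : ContDiff ℝ 2 f := by
    rw [show (2 : WithTop ℕ∞) = 1 + 1 from rfl, contDiff_succ_iff_deriv]
    refine ⟨fun t => (hf' t).differentiableAt, by simp, ?_⟩
    have hde : deriv f = fun t => Real.sqrt (a t) := funext fun t => (hf' t).deriv
    rw [hde]
    exact hqc.of_le one_le_two
  have hvC2 : ContDiff ℝ 2 (f ∘ u) := hfC2.comp hu
  have hvpos : ∀ x, 0 < (f ∘ u) x := by
    intro x
    have : g 0 < g (f (u x)) := by
      rw [hg0, hgf]; exact hupos x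
    exact hgmono.lt_iff_lt.mp this
  refine ⟨hvC2, hvpos, ?_⟩
  -- differentiability of u and its derivative
  have huD : Differentiable ℝ u := hu.differentiable two_ne_zero
  have huD2 : Differentiable ℝ (fderiv ℝ u) :=
    (hu.fderiv_right (by norm_num : (1:WithTop ℕ∞) + 1 ≤ 2)).differentiable one_ne_zero
  intro x
  set e : Fin N → EuclideanSpace ℝ (Fin N) := fun i => EuclideanSpace.single i 1 with he
  -- first derivative of v = f ∘ u
  have hv' : ∀ y, HasFDerivAt (f ∘ u)
      (Real.sqrt (a (u y)) • fderiv ℝ u y) y := by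
    intro y
    exact (hf' (u y)).comp_hasFDerivAt y (huD y).hasFDerivAt
  have hveq : ∀ i, (fun y => fderiv ℝ (f ∘ u) y (e i))
      = fun y => Real.sqrt (a (u y)) * fderiv ℝ u y (e i) := by
    intro i
    funext y
    rw [(hv' y).fderiv]
    simp
  -- second directional derivatives
  have key : ∀ i, fderiv ℝ (fun y => fderiv ℝ (f ∘ u) y (e i)) x (e i)
      = deriv a (u x) / (2 * Real.sqrt (a (u x))) * (fderiv ℝ u x (e i))^2
        + Real.sqrt (a (u x)) * fderiv ℝ (fun y => fderiv ℝ u y (e i)) x (e i) := by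
    intro i
    have hB : HasFDerivAt (fun y => Real.sqrt (a (u y)))
        ((deriv a (u x) / (2 * Real.sqrt (a (u x)))) • fderiv ℝ u x) x :=
      (hq (u x)).comp_hasFDerivAt x (huD x).hasFDerivAt
    have hC : HasFDerivAt (fun y => fderiv ℝ u y (e i))
        ((ContinuousLinearMap.apply ℝ ℝ (e i)).comp (fderiv ℝ (fderiv ℝ u) x)) x :=
      (ContinuousLinearMap.apply ℝ ℝ (e i)).hasFDerivAt.comp x (huD2 x).hasFDerivAt
    have hBC : HasFDerivAt (fun y => Real.sqrt (a (u y)) * fderiv ℝ u y (e i)) _ x := hB.mul hC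
    rw [hveq i, hBC.fderiv, ← hC.fderiv]
    simp
    ring
  have hlap : lap (f ∘ u) x
      = deriv a (u x) / (2 * Real.sqrt (a (u x))) * ‖gradient u x‖^2
        + Real.sqrt (a (u x)) * lap u x := by
    have hgr : ‖gradient u x‖^2 = ∑ i : Fin N, (fderiv ℝ u x (e i))^2 := by
      have h1 : ∀ i : Fin N, fderiv ℝ u x (e i) = gradient u x i := by
        intro i
        rw [show fderiv ℝ u x (e i)
          = @inner ℝ _ _ (gradient u x) (EuclideanSpace.single i (1:ℝ)) from
            (InnerProductSpace.toDual_symm_apply).symm]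
        rw [EuclideanSpace.inner_single_right]
        simp
      simp_rw [h1]
      rw [PiLp.norm_sq_eq_of_L2]
      simp [Real.norm_eq_abs, sq_abs]
    rw [lap, hgr]
    simp only [he] at key ⊢
    simp_rw [key]
    rw [Finset.sum_add_distrib, ← Finset.mul_sum, ← Finset.mul_sum, lap]
  -- final algebra
  have hs : (0:ℝ) < Real.sqrt (a (u x)) := hsq (u x)
  have hs2 : Real.sqrt (a (u x)) * Real.sqrt (a (u x)) = a (u x) :=
    Real.mul_self_sqrt (hapos (u x)).le
  have hux : g ((f ∘ u) x) = u x := hgf (u x)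
  rw [hh, hux, abs_of_pos (hupos x)]
  have hup : u x ^ (p - 1) * u x = u x ^ p := by
    nth_rewrite 2 [show u x = u x ^ (1:ℝ) from (Real.rpow_one _).symm]
    rw [← Real.rpow_add (hupos x)]
    norm_num
  rw [hup, hlap]
  have heq := hueq x
  rw [eq_div_iff hs.ne']
  field_simp
  linear_combination 2 * heq
    - 2 * lap u x * hs2
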